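/- Let a > 0, Δt > 0, and z ≥ 0 be real numbers. Then every complex root ξ of the quadratic (1 + aΔt/2)ξ² + (Δt²z − 2)ξ + (1 − aΔt/2) = 0 satisfies |ξ| ≤ 1 if and only if Δt²z ≤ 4. In particular, for z > 0 this holds if and only if Δt ≤ 2/√z. -/

import Mathlib

set_option maxHeartbeats 2000000 in
/-- CFL condition for the fully explicit second-order-in-time (central difference)
accelerated scheme: all roots of
`(1 + aΔt/2)ξ² + (Δt²z − 2)ξ + (1 − aΔt/2) = 0` have modulus at most 1 iff
`Δt²z ≤ 4`; for `z > 0` this is equivalent to `Δt ≤ 2/√z`. -/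
theorem central_scheme_CFL (a Δt z : ℝ) (ha : 0 < a) (hΔt : 0 < Δt) (hz : 0 ≤ z) :
    ((∀ ξ : ℂ, ((1 + a * Δt / 2 : ℝ) : ℂ) * ξ ^ 2 + ((Δt ^ 2 * z - 2 : ℝ) : ℂ) * ξ +
        ((1 - a * Δt / 2 : ℝ) : ℂ) = 0 → ‖ξ‖ ≤ 1) ↔ Δt ^ 2 * z ≤ 4) ∧
      (0 < z → (Δt ^ 2 * z ≤ 4 ↔ Δt ≤ 2 / Real.sqrt z)) := by
  have haΔ : 0 < a * Δt := mul_pos ha hΔt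
  have hA : (0:ℝ) < 1 + a * Δt / 2 := by nlinarith
  have hs0 : 0 ≤ Δt ^ 2 * z := by positivity
  constructor
  · constructor
    · -- all roots bounded → s ≤ 4
      intro h
      by_contra hs
      push_neg at hs
      have hD : 0 ≤ (Δt ^ 2 * z - 2) ^ 2 - 4 * (1 + a * Δt / 2) * (1 - a * Δt / 2) := by
        nlinarith
      have hS := Real.sq_sqrt hD
      set S := Real.sqrt ((Δt ^ 2 * z - 2) ^ 2 - 4 * (1 + a * Δt / 2) * (1 - a * Δt / 2))
        with hSdef
      have hSnn : 0 ≤ S := Real.sqrt_nonneg _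
      set r := (-(Δt ^ 2 * z - 2) - S) / (2 * (1 + a * Δt / 2)) with hrdef
      have hroot : (1 + a * Δt / 2) * r ^ 2 + (Δt ^ 2 * z - 2) * r + (1 - a * Δt / 2) = 0 := by
        rw [hrdef]
        field_simp
        nlinarith [hS]
      have hr1 : r < -1 := by
        rw [hrdef, div_lt_iff₀ (by linarith : (0:ℝ) < 2 * (1 + a * Δt / 2))]
        have h2AB : 2 * (1 + a * Δt / 2) - (Δt ^ 2 * z - 2) < S := by
          rcases le_or_gt 0 (2 * (1 + a * Δt / 2) - (Δt ^ 2 * z - 2)) with hc | hc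
          · rw [hSdef]
            exact (Real.lt_sqrt hc).mpr (by nlinarith)
          · linarith
        linarith
      have habs := h (r : ℂ) (by exact_mod_cast hroot)
      rw [Complex.norm_real, Real.norm_eq_abs, abs_le] at habs
      linarith [habs.1]
    · -- s ≤ 4 → all roots bounded
      intro hs ξ hξ
      have h1 := congrArg Complex.re hξ
      have h2 := congrArg Complex.im hξ
      simp only [Complex.add_re, Complex.add_im, Complex.mul_re, Complex.mul_im, pow_two,
        Complex.ofReal_re, Complex.ofReal_im, Complex.zero_re, Complex.zero_im] at h1 h2
      set x := ξ.re with hx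
      set y := ξ.im with hy
      have e1 : (1 + a * Δt / 2) * (x ^ 2 - y ^ 2) + (Δt ^ 2 * z - 2) * x
          + (1 - a * Δt / 2) = 0 := by linear_combination h1
      have e2 : (1 + a * Δt / 2) * (2 * x * y) + (Δt ^ 2 * z - 2) * y = 0 := by
        linear_combination h2
      have habs2 : ‖ξ‖ ^ 2 = x ^ 2 + y ^ 2 := by
        rw [Complex.sq_norm, Complex.normSq_apply]; ring
      have hkey : x ^ 2 + y ^ 2 ≤ 1 := by
        rcases eq_or_ne y 0 with hy0 | hy0
        · -- real root
          rw [hy0] at e1 ⊢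
          have hq : (1 + a * Δt / 2) * x ^ 2 + (Δt ^ 2 * z - 2) * x + (1 - a * Δt / 2) = 0 := by
            linear_combination e1
          have hxle : x ≤ 1 := by
            by_contra hc
            push_neg at hc
            have t1 : 0 < x - 1 := by linarith
            have t2 : 0 < (1 + a * Δt / 2) * (x + 1) + (Δt ^ 2 * z - 2) := by nlinarith
            nlinarith [mul_pos t1 t2]
          have hxge : -1 ≤ x := by
            by_contra hc
            push_neg at hc
            have t1 : 0 < -(x + 1) := by linarith
            have t2 : 0 < -((1 + a * Δt / 2) * (x - 1) + (Δt ^ 2 * z - 2)) := by nlinarith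
            nlinarith [mul_pos t1 t2]
          nlinarith
        · -- complex root
          have h2' : 2 * (1 + a * Δt / 2) * x + (Δt ^ 2 * z - 2) = 0 := by
            have hy2 : y * (2 * (1 + a * Δt / 2) * x + (Δt ^ 2 * z - 2)) = 0 := by
              linear_combination e2
            rcases mul_eq_zero.mp hy2 with h | h
            · exact absurd h hy0
            · exact h
          have hAC : (1 + a * Δt / 2) * (x ^ 2 + y ^ 2) = 1 - a * Δt / 2 := by
            linear_combination (-1 : ℝ) * e1 + x * h2'
          by_contra hc
          push_neg at hc
          nlinarith [mul_lt_mul_of_pos_left hc hA]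
      nlinarith [habs2, norm_nonneg ξ]
  · intro hz'
    have hsz : 0 < Real.sqrt z := Real.sqrt_pos.mpr hz'
    have hzz : Real.sqrt z ^ 2 = z := Real.sq_sqrt hz
    constructor
    · intro h
      rw [le_div_iff₀ hsz]
      nlinarith [mul_nonneg hΔt.le hsz.le]
    · intro h
      rw [le_div_iff₀ hsz] at h
      nlinarith [mul_nonneg hΔt.le hsz.le]
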